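/- arXiv:1806.09122 — 2 statements merged into one kernel-verified Lean document; each statement's English description precedes it below -/
import Mathlib

section
/- Let (R, +, ·) be a hyperring. The relations α₊* and α₍ₓ₎* (transitive closures of α₊ and α₍ₓ₎) are strongly regular relations on both (R, +) and (R, ·). -/
/-- A hyperoperation on `H`: every pair maps to a nonempty subset. -/
structure Hyperop (H : Type*) where
  op : H → H → Set H
  op_nonempty : ∀ x y, (op x y).Nonempty

namespace Hyperop

variable {H : Type*}

/-- Extension of the hyperoperation to subsets. -/
def sop (h : Hyperop H) (A B : Set H) : Set H := ⋃ a ∈ A, ⋃ b ∈ B, h.op a b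

/-- Associativity of a hyperoperation (on sets). -/
def IsAssoc (h : Hyperop H) : Prop :=
  ∀ x y z : H, h.sop (h.op x y) {z} = h.sop {x} (h.op y z)

/-- Reproduction axiom: `x ∘ H = H ∘ x = H`. -/
def IsReproductive (h : Hyperop H) : Prop :=
  ∀ x y : H, (∃ u, y ∈ h.op x u) ∧ (∃ v, y ∈ h.op v x)

/-- A relation `T` is strongly regular (on both sides) w.r.t. `h`. -/
def StronglyRegular (h : Hyperop H) (T : H → H → Prop) : Prop :=
  ∀ x y, T x y → ∀ a : H,
    (∀ u ∈ h.op a x, ∀ v ∈ h.op a y, T u v) ∧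
    (∀ u ∈ h.op x a, ∀ v ∈ h.op y a, T u v)

/-- `h.foldl x l` : the set `x ∘ l₁ ∘ ⋯ ∘ lₖ`. -/
def foldl (h : Hyperop H) : H → List H → Set H
  | x, [] => {x}
  | x, y :: l => ⋃ z ∈ h.op x y, h.foldl z l

/-- Hyper-"product" of a nonempty list of elements (empty list gives `∅`). -/
def listProd (h : Hyperop H) : List H → Set H
  | [] => ∅
  | x :: l => h.foldl x l

/-- Fold a list of subsets onto a subset. -/
def setFold (h : Hyperop H) : Set H → List (Set H) → Set H
  | A, [] => A
  | A, B :: l => h.setFold (h.sop A B) l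

end Hyperop

/-- `l'` is obtained from `l` by inserting one consecutive block of copies of `e`
(or is equal to `l`). -/
def InsertBlock {α : Type*} (e : α) (l l' : List α) : Prop :=
  l' = l ∨ ∃ (p q : List α) (k : ℕ), 1 ≤ k ∧ l = p ++ q ∧ l' = p ++ List.replicate k e ++ q

/-- A hyperring: `(R, +)` a hypergroup, `(R, ·)` a semi-hypergroup,
with two-sided distributivity. -/
structure Hyperring (R : Type*) where
  add : Hyperop R
  mul : Hyperop R
  add_assoc : add.IsAssoc
  add_repro : add.IsReproductive
  mul_assoc : mul.IsAssoc
  left_distrib : ∀ x y z : R, mul.sop {x} (add.op y z) = add.sop (mul.op x y) (mul.op x z)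
  right_distrib : ∀ x y z : R, mul.sop (add.op y z) {x} = add.sop (mul.op y x) (mul.op z x)

namespace Hyperring

variable {R : Type*}

/-- Sum of products: `ll` is a list of lists; each inner list is multiplied,
the results are added up. -/
def SOP (S : Hyperring R) : List (List R) → Set R
  | [] => ∅
  | l :: t => S.add.setFold (S.mul.listProd l) (t.map S.mul.listProd)

/-- A valid sum-of-products expression: nonempty list of nonempty lists. -/
def ValidExpr (S : Hyperring R) (ll : List (List R)) : Prop :=
  ll ≠ [] ∧ ∀ l ∈ ll, l ≠ []

/-- The Vougiouklis relation `Γ`. -/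
def gamma (S : Hyperring R) (x y : R) : Prop :=
  ∃ ll, S.ValidExpr ll ∧ x ∈ S.SOP ll ∧ y ∈ S.SOP ll

/-- The relation `α₊` : permuting the summands. -/
def alphaPlus (S : Hyperring R) (x y : R) : Prop :=
  ∃ ll ll', S.ValidExpr ll ∧ ll.Perm ll' ∧ x ∈ S.SOP ll ∧ y ∈ S.SOP ll'

/-- The relation `α×` : permuting the factors inside each product. -/
def alphaTimes (S : Hyperring R) (x y : R) : Prop :=
  ∃ ll ll', S.ValidExpr ll ∧ List.Forall₂ List.Perm ll ll' ∧ x ∈ S.SOP ll ∧ y ∈ S.SOP ll'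

/-- The Davvaz–Vougiouklis relation `α` : permuting factors inside each
product and then permuting the summands. -/
def alpha (S : Hyperring R) (x y : R) : Prop :=
  ∃ ll mid ll', S.ValidExpr ll ∧ List.Forall₂ List.Perm ll mid ∧ mid.Perm ll' ∧
    x ∈ S.SOP ll ∧ y ∈ S.SOP ll'

/-- Condition `𝔓ₑ` : each product of the second expression is obtained from the
corresponding product of the first by inserting a block of copies of `e`. -/
def CondP (S : Hyperring R) (e : R) (ll ll' : List (List R)) : Prop :=
  List.Forall₂ (InsertBlock e) ll ll'

/-- The relation `(λ^e_×)ₘ`. -/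
def lamTimesN (S : Hyperring R) (e : R) (m : ℕ) (x y : R) : Prop :=
  ∃ ll ll', ll.length = m ∧ S.ValidExpr ll ∧ S.CondP e ll ll' ∧
    ((x ∈ S.SOP ll ∧ y ∈ S.SOP ll') ∨ (x ∈ S.SOP ll' ∧ y ∈ S.SOP ll))

/-- The relation `λ^e_×`. -/
def lamTimes (S : Hyperring R) (e : R) (x y : R) : Prop :=
  ∃ m, 1 ≤ m ∧ S.lamTimesN e m x y

/-- The relation `λₑ = λ^e_× ∪ α₊`. -/
def lam (S : Hyperring R) (e : R) (x y : R) : Prop :=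
  S.lamTimes e x y ∨ S.alphaPlus x y

/-- The relation `Λₑ = λ^e_× ∪ α`. -/
def Lam (S : Hyperring R) (e : R) (x y : R) : Prop :=
  S.lamTimes e x y ∨ S.alpha x y

/-- `M` is a `λₑ`-part. -/
def IsLamPart (S : Hyperring R) (e : R) (M : Set R) : Prop :=
  (∀ ll ll', S.ValidExpr ll → ll.Perm ll' → (S.SOP ll ∩ M).Nonempty → S.SOP ll' ⊆ M) ∧
  (∀ ll ll', S.ValidExpr ll → (S.CondP e ll ll' ∨ S.CondP e ll' ll) →
      (S.SOP ll ∩ M).Nonempty → S.SOP ll' ⊆ M)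

/-- A `λₑ`-strong hyperring. -/
def LamStrong (S : Hyperring R) (e : R) : Prop :=
  (∀ x y, Relation.TransGen (S.lam e) x y →
      (S.mul.op x e ∩ S.mul.op y e).Nonempty ∧ (S.mul.op e x ∩ S.mul.op e y).Nonempty) ∧
  (∀ x z, z ∈ S.mul.op x e → x ∈ S.mul.op z e) ∧
  (∀ x z, z ∈ S.mul.op e x → x ∈ S.mul.op e z)

end Hyperring

namespace Hyperop

variable {H : Type*} (h : Hyperop H)

theorem mem_sop {u : H} {A B : Set H} :
    u ∈ h.sop A B ↔ ∃ a ∈ A, ∃ b ∈ B, u ∈ h.op a b := by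
  simp [sop]

theorem sop_mono {A A' B B' : Set H} (hA : A ⊆ A') (hB : B ⊆ B') :
    h.sop A B ⊆ h.sop A' B' := by
  intro u hu
  rw [mem_sop] at hu ⊢
  obtain ⟨a, ha, b, hb, hu⟩ := hu
  exact ⟨a, hA ha, b, hB hb, hu⟩

/-- Element-level associativity. -/
theorem assoc_elem (hass : h.IsAssoc) {x y z u : H} :
    (∃ w ∈ h.op x y, u ∈ h.op w z) ↔ ∃ v ∈ h.op y z, u ∈ h.op x v := by
  have := hass x y z
  have h1 : u ∈ h.sop (h.op x y) {z} ↔ u ∈ h.sop {x} (h.op y z) := by rw [this]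
  simpa [mem_sop] using h1

theorem sop_assoc (hass : h.IsAssoc) (A B C : Set H) :
    h.sop (h.sop A B) C = h.sop A (h.sop B C) := by
  ext u
  simp only [mem_sop]
  constructor
  · rintro ⟨w, ⟨a, ha, b, hb, hw⟩, c, hc, hu⟩
    obtain ⟨v, hv, hu'⟩ := (h.assoc_elem hass).1 ⟨w, hw, hu⟩
    exact ⟨a, ha, v, ⟨b, hb, c, hc, hv⟩, hu'⟩
  · rintro ⟨a, ha, v, ⟨b, hb, c, hc, hv⟩, hu⟩
    obtain ⟨w, hw, hu'⟩ := (h.assoc_elem hass).2 ⟨v, hv, hu⟩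
    exact ⟨w, ⟨a, ha, b, hb, hw⟩, c, hc, hu'⟩

theorem setFold_sop (hass : h.IsAssoc) (A B : Set H) (l : List (Set H)) :
    h.setFold (h.sop A B) l = h.sop A (h.setFold B l) := by
  induction l generalizing B with
  | nil => rfl
  | cons C l ih =>
    show h.setFold (h.sop (h.sop A B) C) l = _
    rw [h.sop_assoc hass, ih]
    rfl

theorem setFold_append_single (A B : Set H) (l : List (Set H)) :
    h.setFold A (l ++ [B]) = h.sop (h.setFold A l) B := by
  induction l generalizing A with
  | nil => rfl
  | cons C l ih => exact ih (h.sop A C)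

theorem setFold_mono {A A' : Set H} {l l' : List (Set H)} (hA : A ⊆ A')
    (hl : List.Forall₂ (· ⊆ ·) l l') : h.setFold A l ⊆ h.setFold A' l' := by
  induction hl generalizing A A' with
  | nil => exact hA
  | cons hB _ ih => exact ih (h.sop_mono hA hB)

theorem mem_foldl_cons_of (hass : h.IsAssoc) {a b x u : H} {l : List H}
    (hx : x ∈ h.foldl b l) (hu : u ∈ h.op a x) : u ∈ h.foldl a (b :: l) := by
  induction l generalizing a b with
  | nil =>
    simp only [foldl, Set.mem_singleton_iff] at hx
    subst hx
    simp only [foldl, Set.mem_iUnion]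
    exact ⟨u, hu, rfl⟩
  | cons c l ih =>
    simp only [foldl, Set.mem_iUnion] at hx
    obtain ⟨z, hz, hx⟩ := hx
    have := ih hx hu
    simp only [foldl, Set.mem_iUnion] at this ⊢
    obtain ⟨t, ht, hmem⟩ := this
    obtain ⟨w, hw, ht'⟩ := (h.assoc_elem hass).2 ⟨z, hz, ht⟩
    exact ⟨w, hw, t, ht', hmem⟩

theorem mem_foldl_append_single {a b u : H} {l : List H} :
    u ∈ h.foldl b (l ++ [a]) ↔ ∃ x ∈ h.foldl b l, u ∈ h.op x a := by
  induction l generalizing b with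
  | nil => simp [foldl]
  | cons c l ih =>
    simp only [List.cons_append, foldl, Set.mem_iUnion]
    constructor
    · rintro ⟨z, hz, hu⟩
      obtain ⟨x, hx, hu⟩ := (ih).1 hu
      exact ⟨x, ⟨z, hz, hx⟩, hu⟩
    · rintro ⟨x, ⟨z, hz, hx⟩, hu⟩
      exact ⟨z, hz, (ih).2 ⟨x, hx, hu⟩⟩

end Hyperop

theorem perm_ne_nil {α : Type*} {l l' : List α} (h : l.Perm l')
    (hne : l ≠ []) : l' ≠ [] := by
  intro h'
  apply hne
  have hl := h.length_eq
  rw [h', List.length_nil] at hl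
  exact List.length_eq_zero_iff.1 hl

theorem forall₂_ne_nil {α : Type*} {r : α → α → Prop} {l l' : List α}
    (h : List.Forall₂ r l l') (hne : l ≠ []) : l' ≠ [] := by
  cases h with
  | nil => exact hne
  | cons _ _ => exact List.cons_ne_nil _ _

theorem forall₂_perm_map {α : Type*} {f : List α → List α}
    (hf : ∀ l l' : List α, l.Perm l' → (f l).Perm (f l'))
    {ll ll' : List (List α)} (h : List.Forall₂ List.Perm ll ll') :
    List.Forall₂ List.Perm (ll.map f) (ll'.map f) := by
  induction h with
  | nil => exact List.Forall₂.nil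
  | cons hp _ ih => exact List.Forall₂.cons (hf _ _ hp) ih

namespace Hyperring

variable {R : Type*} (S : Hyperring R)

theorem distrib_mem_left {a x y w u : R} (hw : w ∈ S.add.op x y)
    (hu : u ∈ S.mul.op a w) :
    ∃ p ∈ S.mul.op a x, ∃ q ∈ S.mul.op a y, u ∈ S.add.op p q := by
  have h1 : u ∈ S.mul.sop {a} (S.add.op x y) :=
    (S.mul.mem_sop).2 ⟨a, rfl, w, hw, hu⟩
  rw [S.left_distrib] at h1
  simpa [Hyperop.mem_sop] using h1

theorem distrib_mem_right {a x y w u : R} (hw : w ∈ S.add.op x y)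
    (hu : u ∈ S.mul.op w a) :
    ∃ p ∈ S.mul.op x a, ∃ q ∈ S.mul.op y a, u ∈ S.add.op p q := by
  have h1 : u ∈ S.mul.sop (S.add.op x y) {a} :=
    (S.mul.mem_sop).2 ⟨w, hw, a, rfl, hu⟩
  rw [S.right_distrib] at h1
  simpa [Hyperop.mem_sop] using h1

theorem sop_distrib_left (a : R) (X Y : Set R) :
    S.mul.sop {a} (S.add.sop X Y) ⊆
      S.add.sop (S.mul.sop {a} X) (S.mul.sop {a} Y) := by
  intro u hu
  rw [Hyperop.mem_sop] at hu
  obtain ⟨a', ha', w, hw, hu⟩ := hu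
  rw [Set.mem_singleton_iff] at ha'
  rw [ha'] at hu
  rw [Hyperop.mem_sop] at hw
  obtain ⟨x, hx, y, hy, hw⟩ := hw
  obtain ⟨p, hp, q, hq, hu⟩ := S.distrib_mem_left hw hu
  exact (S.add.mem_sop).2 ⟨p, (S.mul.mem_sop).2 ⟨a, rfl, x, hx, hp⟩,
    q, (S.mul.mem_sop).2 ⟨a, rfl, y, hy, hq⟩, hu⟩

theorem sop_distrib_right (a : R) (X Y : Set R) :
    S.mul.sop (S.add.sop X Y) {a} ⊆
      S.add.sop (S.mul.sop X {a}) (S.mul.sop Y {a}) := by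
  intro u hu
  rw [Hyperop.mem_sop] at hu
  obtain ⟨w, hw, a', ha', hu⟩ := hu
  rw [Set.mem_singleton_iff] at ha'
  rw [ha'] at hu
  rw [Hyperop.mem_sop] at hw
  obtain ⟨x, hx, y, hy, hw⟩ := hw
  obtain ⟨p, hp, q, hq, hu⟩ := S.distrib_mem_right hw hu
  exact (S.add.mem_sop).2 ⟨p, (S.mul.mem_sop).2 ⟨x, hx, a, rfl, hp⟩,
    q, (S.mul.mem_sop).2 ⟨y, hy, a, rfl, hq⟩, hu⟩

theorem mul_setFold_left (a : R) (B : Set R) (l : List (Set R)) :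
    S.mul.sop {a} (S.add.setFold B l) ⊆
      S.add.setFold (S.mul.sop {a} B) (l.map (S.mul.sop {a} ·)) := by
  induction l generalizing B with
  | nil => exact subset_rfl
  | cons C l ih =>
    calc S.mul.sop {a} (S.add.setFold (S.add.sop B C) l)
        ⊆ S.add.setFold (S.mul.sop {a} (S.add.sop B C))
            (l.map (S.mul.sop {a} ·)) := ih _
      _ ⊆ S.add.setFold (S.add.sop (S.mul.sop {a} B) (S.mul.sop {a} C))
            (l.map (S.mul.sop {a} ·)) :=
          S.add.setFold_mono (S.sop_distrib_left a B C) (List.forall₂_same.2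
            (fun _ _ => subset_rfl))

theorem mul_setFold_right (a : R) (B : Set R) (l : List (Set R)) :
    S.mul.sop (S.add.setFold B l) {a} ⊆
      S.add.setFold (S.mul.sop B {a}) (l.map (S.mul.sop · {a})) := by
  induction l generalizing B with
  | nil => exact subset_rfl
  | cons C l ih =>
    calc S.mul.sop (S.add.setFold (S.add.sop B C) l) {a}
        ⊆ S.add.setFold (S.mul.sop (S.add.sop B C) {a})
            (l.map (S.mul.sop · {a})) := ih _
      _ ⊆ S.add.setFold (S.add.sop (S.mul.sop B {a}) (S.mul.sop C {a}))
            (l.map (S.mul.sop · {a})) :=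
          S.add.setFold_mono (S.sop_distrib_right a B C) (List.forall₂_same.2
            (fun _ _ => subset_rfl))

theorem mul_listProd_left (a : R) (l : List R) :
    S.mul.sop {a} (S.mul.listProd l) ⊆ S.mul.listProd (a :: l) := by
  intro u hu
  rw [Hyperop.mem_sop] at hu
  obtain ⟨a', ha', x, hx, hu⟩ := hu
  rw [Set.mem_singleton_iff] at ha'
  rw [ha'] at hu
  match l with
  | [] => exact absurd hx (Set.notMem_empty x)
  | b :: rest => exact S.mul.mem_foldl_cons_of S.mul_assoc hx hu

theorem mul_listProd_right (a : R) (l : List R) :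
    S.mul.sop (S.mul.listProd l) {a} ⊆ S.mul.listProd (l ++ [a]) := by
  intro u hu
  rw [Hyperop.mem_sop] at hu
  obtain ⟨x, hx, a', ha', hu⟩ := hu
  rw [Set.mem_singleton_iff] at ha'
  rw [ha'] at hu
  match l with
  | [] => exact absurd hx (Set.notMem_empty x)
  | b :: rest => exact (S.mul.mem_foldl_append_single).2 ⟨x, hx, hu⟩

theorem SOP_add_left {x u a : R} {ll : List (List R)} (hll : ll ≠ [])
    (hx : x ∈ S.SOP ll) (hu : u ∈ S.add.op a x) : u ∈ S.SOP ([a] :: ll) := by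
  match ll with
  | l :: t =>
    show u ∈ S.add.setFold (S.mul.listProd [a]) ((l :: t).map S.mul.listProd)
    have : S.mul.listProd [a] = {a} := rfl
    rw [this, List.map_cons]
    show u ∈ S.add.setFold (S.add.sop {a} (S.mul.listProd l)) (t.map S.mul.listProd)
    rw [S.add.setFold_sop S.add_assoc]
    exact (S.add.mem_sop).2 ⟨a, rfl, x, hx, hu⟩

theorem SOP_add_right {x u a : R} {ll : List (List R)} (hll : ll ≠ [])
    (hx : x ∈ S.SOP ll) (hu : u ∈ S.add.op x a) : u ∈ S.SOP (ll ++ [[a]]) := by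
  match ll with
  | l :: t =>
    show u ∈ S.add.setFold (S.mul.listProd l) ((t ++ [[a]]).map S.mul.listProd)
    rw [List.map_append, List.map_singleton]
    have : S.mul.listProd [a] = {a} := rfl
    rw [this, S.add.setFold_append_single]
    exact (S.add.mem_sop).2 ⟨x, hx, a, rfl, hu⟩

theorem SOP_mul_left {x u a : R} {ll : List (List R)}
    (hx : x ∈ S.SOP ll) (hu : u ∈ S.mul.op a x) :
    u ∈ S.SOP (ll.map (a :: ·)) := by
  match ll with
  | [] => exact absurd hx (Set.notMem_empty x)
  | l :: t =>
    have h1 : u ∈ S.mul.sop {a} (S.SOP (l :: t)) :=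
      (S.mul.mem_sop).2 ⟨a, rfl, x, hx, hu⟩
    have h2 := S.mul_setFold_left a (S.mul.listProd l) (t.map S.mul.listProd) h1
    refine S.add.setFold_mono (S.mul_listProd_left a l) ?_ h2
    rw [List.map_map, List.map_map]
    rw [List.forall₂_map_right_iff, List.forall₂_map_left_iff]
    exact List.forall₂_same.2 fun m _ => S.mul_listProd_left a m

theorem SOP_mul_right {x u a : R} {ll : List (List R)}
    (hx : x ∈ S.SOP ll) (hu : u ∈ S.mul.op x a) :
    u ∈ S.SOP (ll.map (· ++ [a])) := by
  match ll with
  | [] => exact absurd hx (Set.notMem_empty x)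
  | l :: t =>
    have h1 : u ∈ S.mul.sop (S.SOP (l :: t)) {a} :=
      (S.mul.mem_sop).2 ⟨x, hx, a, rfl, hu⟩
    have h2 := S.mul_setFold_right a (S.mul.listProd l) (t.map S.mul.listProd) h1
    refine S.add.setFold_mono (S.mul_listProd_right a l) ?_ h2
    rw [List.map_map, List.map_map]
    rw [List.forall₂_map_right_iff, List.forall₂_map_left_iff]
    exact List.forall₂_same.2 fun m _ => S.mul_listProd_right a m

/-- One-step strong regularity of `α₊` on `(R, +)` and `(R, ·)`,
and of `α×` likewise. -/
theorem alphaPlus_sr_add : S.add.StronglyRegular S.alphaPlus := by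
  rintro x y ⟨ll, ll', ⟨hne, hval⟩, hperm, hx, hy⟩ a
  constructor
  · intro u hu v hv
    refine ⟨[a] :: ll, [a] :: ll', ⟨List.cons_ne_nil _ _, ?_⟩, hperm.cons _,
      S.SOP_add_left hne hx hu, S.SOP_add_left (perm_ne_nil hperm hne) hy hv⟩
    intro l hl
    rcases List.mem_cons.1 hl with rfl | hl
    · simp
    · exact hval l hl
  · intro u hu v hv
    refine ⟨ll ++ [[a]], ll' ++ [[a]], ⟨by simp [hne], ?_⟩, hperm.append_right _,
      S.SOP_add_right hne hx hu, S.SOP_add_right (perm_ne_nil hperm hne) hy hv⟩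
    intro l hl
    rcases List.mem_append.1 hl with hl | hl
    · exact hval l hl
    · simp at hl; subst hl; simp

theorem alphaPlus_sr_mul : S.mul.StronglyRegular S.alphaPlus := by
  rintro x y ⟨ll, ll', ⟨hne, hval⟩, hperm, hx, hy⟩ a
  constructor
  · intro u hu v hv
    refine ⟨ll.map (a :: ·), ll'.map (a :: ·), ⟨by simp [hne], ?_⟩, hperm.map _,
      S.SOP_mul_left hx hu, S.SOP_mul_left hy hv⟩
    intro l hl
    simp only [List.mem_map] at hl
    obtain ⟨m, _, rfl⟩ := hl
    exact List.cons_ne_nil _ _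
  · intro u hu v hv
    refine ⟨ll.map (· ++ [a]), ll'.map (· ++ [a]), ⟨by simp [hne], ?_⟩, hperm.map _,
      S.SOP_mul_right hx hu, S.SOP_mul_right hy hv⟩
    intro l hl
    simp only [List.mem_map] at hl
    obtain ⟨m, _, rfl⟩ := hl
    simp

theorem alphaTimes_sr_add : S.add.StronglyRegular S.alphaTimes := by
  rintro x y ⟨ll, ll', ⟨hne, hval⟩, hperm, hx, hy⟩ a
  constructor
  · intro u hu v hv
    refine ⟨[a] :: ll, [a] :: ll', ⟨List.cons_ne_nil _ _, ?_⟩,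
      List.Forall₂.cons (List.Perm.refl _) hperm,
      S.SOP_add_left hne hx hu, S.SOP_add_left (forall₂_ne_nil hperm hne) hy hv⟩
    intro l hl
    rcases List.mem_cons.1 hl with rfl | hl
    · simp
    · exact hval l hl
  · intro u hu v hv
    refine ⟨ll ++ [[a]], ll' ++ [[a]], ⟨by simp [hne], ?_⟩,
      List.rel_append hperm (List.Forall₂.cons (List.Perm.refl _) List.Forall₂.nil),
      S.SOP_add_right hne hx hu, S.SOP_add_right (forall₂_ne_nil hperm hne) hy hv⟩
    intro l hl
    rcases List.mem_append.1 hl with hl | hl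
    · exact hval l hl
    · simp at hl; subst hl; simp

theorem alphaTimes_sr_mul : S.mul.StronglyRegular S.alphaTimes := by
  rintro x y ⟨ll, ll', ⟨hne, hval⟩, hperm, hx, hy⟩ a
  constructor
  · intro u hu v hv
    refine ⟨ll.map (a :: ·), ll'.map (a :: ·), ⟨by simp [hne], ?_⟩,
      forall₂_perm_map (fun _ _ hp => hp.cons a) hperm,
      S.SOP_mul_left hx hu, S.SOP_mul_left hy hv⟩
    intro l hl
    simp only [List.mem_map] at hl
    obtain ⟨m, _, rfl⟩ := hl
    exact List.cons_ne_nil _ _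
  · intro u hu v hv
    refine ⟨ll.map (· ++ [a]), ll'.map (· ++ [a]), ⟨by simp [hne], ?_⟩,
      forall₂_perm_map (fun _ _ hp => hp.append_right _) hperm,
      S.SOP_mul_right hx hu, S.SOP_mul_right hy hv⟩
    intro l hl
    simp only [List.mem_map] at hl
    obtain ⟨m, _, rfl⟩ := hl
    simp

end Hyperring

/-- Strong regularity passes to the transitive closure. -/
theorem Hyperop.StronglyRegular.transGen {H : Type*} {h : Hyperop H}
    {T : H → H → Prop} (hsr : h.StronglyRegular T) :
    h.StronglyRegular (Relation.TransGen T) := by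
  intro x y hxy a
  constructor
  · intro u hu
    induction hxy with
    | single hT =>
      intro v hv
      exact Relation.TransGen.single ((hsr _ _ hT a).1 u hu v hv)
    | tail hxb hT ih =>
      intro v hv
      obtain ⟨w, hw⟩ := h.op_nonempty a _
      exact (ih w hw).trans (Relation.TransGen.single ((hsr _ _ hT a).1 w hw v hv))
  · intro u hu
    induction hxy with
    | single hT =>
      intro v hv
      exact Relation.TransGen.single ((hsr _ _ hT a).2 u hu v hv)
    | tail hxb hT ih =>
      intro v hv
      obtain ⟨w, hw⟩ := h.op_nonempty _ a
      exact (ih w hw).trans (Relation.TransGen.single ((hsr _ _ hT a).2 w hw v hv))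

/-- `α₊*` and `α×*` are strongly regular relations on both
`(R, +)` and `(R, ·)`. -/
theorem stmt8 {R : Type*} (S : Hyperring R) :
    S.add.StronglyRegular (Relation.TransGen S.alphaPlus) ∧
    S.mul.StronglyRegular (Relation.TransGen S.alphaPlus) ∧
    S.add.StronglyRegular (Relation.TransGen S.alphaTimes) ∧
    S.mul.StronglyRegular (Relation.TransGen S.alphaTimes) :=
  ⟨S.alphaPlus_sr_add.transGen, S.alphaPlus_sr_mul.transGen,
   S.alphaTimes_sr_add.transGen, S.alphaTimes_sr_mul.transGen⟩
end

section
/- Let (R, +, ·) be a hyperring, e ∈ R, and M a nonempty subset of R. Then M is a λₑ-part of R if and only if for all x ∈ M and y ∈ R, x λₑ y implies y ∈ M, if and only if for all x ∈ M and y ∈ R, x λₑ* y implies y ∈ M. -/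
section Aux

variable {H : Type*}

lemma sop_empty_left (h : Hyperop H) (B : Set H) : h.sop ∅ B = ∅ := by
  simp [Hyperop.sop]

lemma sop_empty_right (h : Hyperop H) (A : Set H) : h.sop A ∅ = ∅ := by
  simp [Hyperop.sop]

lemma setFold_empty (h : Hyperop H) : ∀ l : List (Set H), h.setFold ∅ l = ∅ := by
  intro l
  induction l with
  | nil => rfl
  | cons B t ih => simp [Hyperop.setFold, sop_empty_left, ih]

lemma setFold_mem_empty (h : Hyperop H) :
    ∀ (l : List (Set H)) (A : Set H), (∅ : Set H) ∈ l → h.setFold A l = ∅ := by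
  intro l
  induction l with
  | nil => intro A hA; simp at hA
  | cons B t ih =>
    intro A hA
    rcases List.mem_cons.1 hA with hB | hB
    · subst hB
      simp [Hyperop.setFold, sop_empty_right, setFold_empty]
    · exact ih _ hB

lemma SOP_empty_inner {R : Type*} (S : Hyperring R) {ll : List (List R)}
    (hl : ∃ l ∈ ll, l = []) : S.SOP ll = ∅ := by
  rcases hl with ⟨l, hmem, hl⟩
  cases ll with
  | nil => simp at hmem
  | cons a t =>
    rcases List.mem_cons.1 hmem with h | h
    · subst h; subst hl
      simp [Hyperring.SOP, Hyperop.listProd, setFold_empty]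
    · have : (∅ : Set R) ∈ t.map S.mul.listProd := by
        subst hl
        exact List.mem_map.2 ⟨[], h, rfl⟩
      exact setFold_mem_empty _ _ _ this

lemma insertBlock_ne_nil {α : Type*} {e : α} {l l' : List α}
    (h : InsertBlock e l l') (hl : l ≠ []) : l' ≠ [] := by
  rcases h with h | ⟨p, q, k, hk, _, h⟩
  · subst h; exact hl
  · subst h
    simp only [ne_eq, List.append_eq_nil_iff, List.replicate_eq_nil_iff]
    rintro ⟨⟨_, hk0⟩, _⟩
    omega

lemma forall₂_insert_ne_nil {α : Type*} {e : α} :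
    ∀ {ll ll' : List (List α)}, List.Forall₂ (InsertBlock e) ll ll' →
      (∀ l ∈ ll, l ≠ []) → ∀ l' ∈ ll', l' ≠ [] := by
  intro ll ll' hc
  induction hc with
  | nil => intro _ l' hl'; simp at hl'
  | cons hab hrest ih =>
    intro hall l' hl'
    rcases List.mem_cons.1 hl' with h | h
    · subst h
      exact insertBlock_ne_nil hab (hall _ List.mem_cons_self)
    · exact ih (fun l hl => hall l (List.mem_cons_of_mem _ hl)) _ h

lemma condP_valid {R : Type*} (S : Hyperring R) {e : R} {ll ll' : List (List R)}
    (hv : S.ValidExpr ll) (hc : S.CondP e ll ll') : S.ValidExpr ll' := by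
  obtain ⟨hne, hall⟩ := hv
  constructor
  · intro h
    subst h
    have := hc.length_eq
    simp at this
    exact hne this
  · exact forall₂_insert_ne_nil hc hall

end Aux

/-- characterizations of `λₑ`-parts. -/
theorem stmt13 {R : Type*} (S : Hyperring R) (e : R) (M : Set R) (hM : M.Nonempty) :
    (S.IsLamPart e M ↔ ∀ x ∈ M, ∀ y : R, S.lam e x y → y ∈ M) ∧
    (S.IsLamPart e M ↔ ∀ x ∈ M, ∀ y : R, Relation.TransGen (S.lam e) x y → y ∈ M) := by
  have h1 : S.IsLamPart e M ↔ ∀ x ∈ M, ∀ y : R, S.lam e x y → y ∈ M := by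
    constructor
    · rintro ⟨hperm, hcond⟩ x hx y hxy
      rcases hxy with ⟨m, _, ll, ll', _, hv, hc, hcase⟩ | ⟨ll, ll', hv, hp, hxl, hyl⟩
      · rcases hcase with ⟨hxl, hyl⟩ | ⟨hxl, hyl⟩
        · exact hcond ll ll' hv (Or.inl hc) ⟨x, hxl, hx⟩ hyl
        · exact hcond ll' ll (condP_valid S hv hc) (Or.inr hc) ⟨x, hxl, hx⟩ hyl
      · exact hperm ll ll' hv hp ⟨x, hxl, hx⟩ hyl
    · intro hcl
      constructor
      · rintro ll ll' hv hp ⟨a, hal, haM⟩ y hy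
        exact hcl a haM y (Or.inr ⟨ll, ll', hv, hp, hal, hy⟩)
      · rintro ll ll' hv hc ⟨a, hal, haM⟩ y hy
        have hm : 1 ≤ ll.length := by
          rcases ll with _ | ⟨l, t⟩
          · exact absurd rfl hv.1
          · simp
        rcases hc with hc | hc
        · exact hcl a haM y (Or.inl ⟨ll.length, hm, ll, ll', rfl, hv, hc, Or.inl ⟨hal, hy⟩⟩)
        · -- CondP ll' ll : either ll' has an empty inner list (then SOP ll' = ∅) or valid
          by_cases hve : ∃ l ∈ ll', l = []
          · rw [SOP_empty_inner S hve] at hy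
            exact absurd hy (Set.notMem_empty y)
          · have hv' : S.ValidExpr ll' := by
              constructor
              · intro h
                subst h
                have := hc.length_eq
                simp at this
                exact hv.1 (List.length_eq_zero_iff.1 this.symm)
              · intro l hl
                exact fun h => hve ⟨l, hl, h⟩
            have hm' : 1 ≤ ll'.length := by
              rcases ll' with _ | ⟨l, t⟩
              · exact absurd rfl hv'.1
              · simp
            exact hcl a haM y
              (Or.inl ⟨ll'.length, hm', ll', ll, rfl, hv', hc, Or.inr ⟨hal, hy⟩⟩)
  have h2 : (∀ x ∈ M, ∀ y : R, S.lam e x y → y ∈ M) ↔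
      (∀ x ∈ M, ∀ y : R, Relation.TransGen (S.lam e) x y → y ∈ M) := by
    constructor
    · intro h x hx y hxy
      induction hxy with
      | single h' => exact h x hx _ h'
      | tail _ h' ih => exact h _ ih _ h'
    · intro h x hx y hxy
      exact h x hx y (Relation.TransGen.single hxy)
  exact ⟨h1, h1.trans h2⟩
end
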